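/- Let λ₁,…,λₙ be real numbers with λᵢ ≥ 1 for all i and λ₁ + ⋯ + λₙ = 2n. Then λ₁ ⋯ λₙ ≥ n + 1. -/

import Mathlib

lemma aux_one_add_sum_le_prod {ι : Type*} (s : Finset ι) (f : ι → ℝ)
    (hf : ∀ i ∈ s, 0 ≤ f i) : 1 + ∑ i ∈ s, f i ≤ ∏ i ∈ s, (1 + f i) := by
  induction s using Finset.cons_induction with
  | empty => simp
  | cons a s ha ih =>
    rw [Finset.sum_cons, Finset.prod_cons]
    have h0 : 0 ≤ f a := hf a (Finset.mem_cons_self a s)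
    have hs : ∀ i ∈ s, 0 ≤ f i := fun i hi => hf i (Finset.mem_cons_of_mem hi)
    have h1 : 1 + ∑ i ∈ s, f i ≤ ∏ i ∈ s, (1 + f i) := ih hs
    have hsum : 0 ≤ ∑ i ∈ s, f i := Finset.sum_nonneg hs
    nlinarith

/-- If `λ₁,…,λₙ` are reals with each `λᵢ ≥ 1` and `∑ λᵢ = 2n`, then
`∏ λᵢ ≥ n + 1`. -/
theorem prod_ge_of_ge_one_sum_eq (n : ℕ) (l : Fin n → ℝ)
    (h1 : ∀ i, 1 ≤ l i) (hsum : ∑ i, l i = 2 * n) :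
    (n : ℝ) + 1 ≤ ∏ i, l i := by
  have key := aux_one_add_sum_le_prod Finset.univ (fun i => l i - 1)
    (fun i _ => by show 0 ≤ l i - 1; linarith [h1 i])
  simp only [add_sub_cancel] at key
  have : ∑ i, (l i - 1) = (n : ℝ) := by
    rw [Finset.sum_sub_distrib, hsum]
    simp
    ring
  rw [this] at key
  linarith
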